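/- Let D be a 1-design with incidence matrix M (rows = blocks, columns = points), and let G be an automorphism group of D acting on points with orbits V_1,…,V_n and on blocks with orbits B_1,…,B_m. Define the orbit matrix O by O_{i,j} = the number of points of V_j incident with a (any) block of B_i. Then for each block x in orbit B_s and each t, the sum over blocks x' in B_t of |x ∩ x'| equals Σ_{j=1}^n (|B_t|/|V_j|) · O_{s,j} · O_{t,j}. -/

import Mathlib

open Matrix Finset

/-- For a 1-design with automorphism group G, point orbits V_1,…,V_n,
block orbits B_1,…,B_m and orbit matrix O, for every block x in orbit B_s:
∑_{x' ∈ B_t} |x ∩ x'| = ∑_j (|B_t|/|V_j|) · O_{s,j} · O_{t,j}. -/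
theorem stmt5 {P B G : Type*} [Fintype P] [Fintype B] [Group G]
    [MulAction G P] [MulAction G B]
    (Inc : B → P → Prop) [∀ x, DecidablePred (Inc x)]
    (hGInc : ∀ (g : G) (x : B) (pt : P), Inc x pt ↔ Inc (g • x) (g • pt))
    (k r : ℕ)
    (hk : ∀ x : B, (Finset.univ.filter (fun pt => Inc x pt)).card = k)
    (hr : ∀ pt : P, (Finset.univ.filter (fun x => Inc x pt)).card = r)
    (n m : ℕ) (Vo : Fin n → Finset P) (Bo : Fin m → Finset B)
    (hVo : ∀ j, ∃ pt, (Vo j : Set P) = MulAction.orbit G pt)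
    (hVpart : ∀ pt : P, ∃! j, pt ∈ Vo j)
    (hBo : ∀ i, ∃ x, (Bo i : Set B) = MulAction.orbit G x)
    (hBpart : ∀ x : B, ∃! i, x ∈ Bo i)
    (O : Matrix (Fin m) (Fin n) ℕ)
    (hO : ∀ i j, ∀ x ∈ Bo i, O i j = ((Vo j).filter (fun pt => Inc x pt)).card) :
    ∀ (s t : Fin m), ∀ x ∈ Bo s,
      (∑ x' ∈ Bo t,
          (((Finset.univ.filter (fun pt => Inc x pt ∧ Inc x' pt)).card : ℚ)))
        = ∑ j, (((Bo t).card : ℚ) / ((Vo j).card : ℚ)) * (O s j : ℚ) * (O t j : ℚ) := by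
  classical
  intro s t x hx
  set c : P → ℕ := fun pt => ((Bo t).filter (fun x' => Inc x' pt)).card with hc
  -- Bo t is closed under the action
  obtain ⟨x₀, hx₀⟩ := hBo t
  have hclosed : ∀ (g : G) (x' : B), x' ∈ Bo t → g • x' ∈ Bo t := by
    intro g x' h
    have h1 : x' ∈ (Bo t : Set B) := h
    rw [hx₀] at h1
    obtain ⟨h', rfl⟩ := h1
    have h2 : (g * (h' : G)) • x₀ ∈ MulAction.orbit G x₀ := MulAction.mem_orbit _ _
    rw [← hx₀] at h2
    simpa [smul_smul] using h2
  -- c is invariant under the action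
  have hcg : ∀ (g : G) (pt : P), c (g • pt) = c pt := by
    intro g pt
    apply Finset.card_bij (fun x' _ => g⁻¹ • x')
    · intro a ha
      simp only [Finset.mem_filter] at ha ⊢
      refine ⟨hclosed g⁻¹ a ha.1, ?_⟩
      have := (hGInc g⁻¹ a (g • pt)).mp ha.2
      simpa [smul_smul] using this
    · intro a _ b _ h
      exact smul_left_cancel _ h
    · intro b hb
      simp only [Finset.mem_filter] at hb
      exact ⟨g • b, Finset.mem_filter.mpr ⟨hclosed g b hb.1, (hGInc g b pt).mp hb.2⟩,
        by simp⟩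
  -- c is constant on each point orbit
  have hconst : ∀ j, ∀ pt ∈ Vo j, ∀ pt' ∈ Vo j, c pt = c pt' := by
    intro j pt hpt pt' hpt'
    obtain ⟨p₀, hp₀⟩ := hVo j
    have h1 : pt ∈ MulAction.orbit G p₀ := by rw [← hp₀]; exact hpt
    have h2 : pt' ∈ MulAction.orbit G p₀ := by rw [← hp₀]; exact hpt'
    obtain ⟨g, rfl⟩ := h1
    obtain ⟨g', rfl⟩ := h2
    rw [hcg, hcg]
  -- each Vo j is nonempty
  have hVne : ∀ j, (Vo j).Nonempty := by
    intro j
    obtain ⟨p₀, hp₀⟩ := hVo j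
    have : p₀ ∈ (Vo j : Set P) := by rw [hp₀]; exact MulAction.mem_orbit_self p₀
    exact ⟨p₀, this⟩
  -- double counting: sum of c over Vo j
  have hdc : ∀ j, ∑ pt ∈ Vo j, c pt = (Bo t).card * O t j := by
    intro j
    have h1 : ∑ pt ∈ Vo j, c pt
        = ∑ x' ∈ Bo t, ((Vo j).filter (fun pt => Inc x' pt)).card := by
      simp only [hc, Finset.card_filter]
      rw [Finset.sum_comm]
    rw [h1, Finset.sum_congr rfl (fun x' hx' => (hO t j x' hx').symm)]
    simp [mul_comm]
  -- value of c on Vo j, rationally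
  have hcval : ∀ j, ∀ pt ∈ Vo j,
      (c pt : ℚ) = ((Bo t).card : ℚ) * (O t j : ℚ) / ((Vo j).card : ℚ) := by
    intro j pt hpt
    have h1 : ∑ pt' ∈ Vo j, c pt' = (Vo j).card * c pt := by
      rw [Finset.sum_congr rfl (fun pt' hpt' => hconst j pt' hpt' pt hpt)]
      simp [mul_comm]
    have h2 : ((Vo j).card : ℚ) * (c pt : ℚ) = ((Bo t).card : ℚ) * (O t j : ℚ) := by
      have := hdc j
      rw [h1] at this
      exact_mod_cast congrArg (Nat.cast : ℕ → ℚ) this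
    have hne : ((Vo j).card : ℚ) ≠ 0 :=
      (Nat.cast_ne_zero (R := ℚ)).mpr (Finset.card_pos.mpr (hVne j)).ne'
    field_simp
    linarith [h2]
  have hne : ∀ j, ((Vo j).card : ℚ) ≠ 0 := fun j =>
    (Nat.cast_ne_zero (R := ℚ)).mpr (Finset.card_pos.mpr (hVne j)).ne'
  -- rewrite LHS as a sum over points incident with x
  have hswapN : (∑ x' ∈ Bo t, (Finset.univ.filter (fun pt => Inc x pt ∧ Inc x' pt)).card)
      = ∑ pt ∈ Finset.univ.filter (fun pt => Inc x pt), c pt := by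
    simp only [hc, Finset.card_filter, Finset.sum_filter]
    rw [Finset.sum_comm]
    refine Finset.sum_congr rfl fun pt _ => ?_
    by_cases h : Inc x pt <;> simp [h]
  have hswap : ∑ x' ∈ Bo t,
      (((Finset.univ.filter (fun pt => Inc x pt ∧ Inc x' pt)).card : ℚ))
      = ∑ pt ∈ Finset.univ.filter (fun pt => Inc x pt), (c pt : ℚ) := by
    exact_mod_cast hswapN
  rw [hswap]
  -- partition the points over the orbits Vo j
  have hpart : ∀ f : P → ℚ, ∑ pt, f pt = ∑ j, ∑ pt ∈ Vo j, f pt := by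
    intro f
    have hdisj : ((Finset.univ : Finset (Fin n)) : Set (Fin n)).PairwiseDisjoint Vo := by
      intro i _ j _ hij
      simp only [Finset.disjoint_left]
      intro a hai haj
      obtain ⟨j₀, _, huniq⟩ := hVpart a
      exact hij ((huniq i hai).trans (huniq j haj).symm)
    rw [← Finset.sum_biUnion hdisj]
    congr 1
    symm
    apply Finset.eq_univ_of_forall
    intro pt
    obtain ⟨j, hj, _⟩ := hVpart pt
    exact Finset.mem_biUnion.mpr ⟨j, Finset.mem_univ j, hj⟩
  have hfin : ∑ pt ∈ Finset.univ.filter (fun pt => Inc x pt), (c pt : ℚ)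
      = ∑ j, ∑ pt ∈ (Vo j).filter (fun pt => Inc x pt), (c pt : ℚ) := by
    rw [Finset.sum_filter, hpart (fun pt => if Inc x pt then (c pt : ℚ) else 0)]
    exact Finset.sum_congr rfl fun j _ => (Finset.sum_filter _ _).symm
  rw [hfin]
  apply Finset.sum_congr rfl
  intro j _
  have hterm : ∑ pt ∈ (Vo j).filter (fun pt => Inc x pt), (c pt : ℚ)
      = (O s j : ℚ) * (((Bo t).card : ℚ) * (O t j : ℚ) / ((Vo j).card : ℚ)) := by
    rw [Finset.sum_congr rfl (fun pt hpt =>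
      hcval j pt (Finset.mem_filter.mp hpt).1)]
    rw [Finset.sum_const, ← hO s j x hx]
    simp [mul_comm]
  rw [hterm]
  ring
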